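/- Let A and B be Banach algebras and let φ : A → B and ψ : B → A be continuous algebra homomorphisms with φ ∘ ψ = id_B. If the bidual A** endowed with the first Arens product □ is approximately cyclic amenable, then (B**, □) is approximately cyclic amenable. -/

import Mathlib

open Filter Topology

noncomputable section

universe u v

variable {A : Type u} [NonUnitalNormedRing A] [NormedSpace ℂ A]
  [IsScalarTower ℂ A A] [SMulCommClass ℂ A A]

/-- The left module action of `A` on its dual `A*`: `(a · f) b = f (b * a)`. -/
def lAct (a : A) (f : A →L[ℂ] ℂ) : A →L[ℂ] ℂ :=
  f.comp ((ContinuousLinearMap.mul ℂ A).flip a)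

/-- The right module action of `A` on its dual `A*`: `(f · a) b = f (a * b)`. -/
def rAct (f : A →L[ℂ] ℂ) (a : A) : A →L[ℂ] ℂ :=
  f.comp (ContinuousLinearMap.mul ℂ A a)

/-- A bounded linear `D : A → A*` is a derivation if `D (a * b) = D a · b + a · D b`. -/
def IsDerivation (D : A →L[ℂ] (A →L[ℂ] ℂ)) : Prop :=
  ∀ a b : A, D (a * b) = rAct (D a) b + lAct a (D b)

/-- A derivation `D : A → A*` is cyclic if `⟨D a, b⟩ + ⟨D b, a⟩ = 0` for all `a, b`. -/
def IsCyclicDeriv (D : A →L[ℂ] (A →L[ℂ] ℂ)) : Prop :=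
  ∀ a b : A, D a b + D b a = 0

/-- `D : A → A*` is approximately inner if there is a net `(f i)` in `A*` with
`D a = lim_i (a · f i - f i · a)` in norm, for every `a ∈ A`. -/
def IsApproxInner {A : Type u} [NonUnitalNormedRing A] [NormedSpace ℂ A]
    [IsScalarTower ℂ A A] [SMulCommClass ℂ A A] (D : A →L[ℂ] (A →L[ℂ] ℂ)) : Prop :=
  ∃ (ι : Type u) (l : Filter ι) (f : ι → (A →L[ℂ] ℂ)), l.NeBot ∧
    ∀ a : A, Tendsto (fun i => lAct a (f i) - rAct (f i) a) l (𝓝 (D a))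

/-- `D : A → A*` is inner if `D a = a · f - f · a` for some fixed `f ∈ A*`. -/
def IsInner (D : A →L[ℂ] (A →L[ℂ] ℂ)) : Prop :=
  ∃ f : A →L[ℂ] ℂ, ∀ a : A, D a = lAct a f - rAct f a

/-- A Banach algebra is approximately cyclic amenable if every cyclic bounded
derivation `D : A → A*` is approximately inner. -/
def ApproxCyclicAmenable (A : Type u) [NonUnitalNormedRing A] [NormedSpace ℂ A]
    [IsScalarTower ℂ A A] [SMulCommClass ℂ A A] : Prop :=
  ∀ D : A →L[ℂ] (A →L[ℂ] ℂ), IsDerivation D → IsCyclicDeriv D → IsApproxInner D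

/-- A Banach algebra is cyclic amenable if every cyclic bounded derivation
`D : A → A*` is inner. -/
def CyclicAmenable (A : Type u) [NonUnitalNormedRing A] [NormedSpace ℂ A]
    [IsScalarTower ℂ A A] [SMulCommClass ℂ A A] : Prop :=
  ∀ D : A →L[ℂ] (A →L[ℂ] ℂ), IsDerivation D → IsCyclicDeriv D → IsInner D

/-- The bidual of `A`; below we install the first Arens product on it. -/
abbrev Bidual (A : Type u) [NormedAddCommGroup A] [NormedSpace ℂ A] : Type u :=
  (A →L[ℂ] ℂ) →L[ℂ] ℂ

namespace Bidual

variable (A)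

/-- `f ↦ (a ↦ f · a)` where `(f · a) b = f (a * b)`, as a continuous bilinear map. -/
def rActL : (A →L[ℂ] ℂ) →L[ℂ] A →L[ℂ] (A →L[ℂ] ℂ) :=
  (((ContinuousLinearMap.compL ℂ A (A →L[ℂ] A) (A →L[ℂ] ℂ)).flip
      (ContinuousLinearMap.mul ℂ A)).comp
    (ContinuousLinearMap.compL ℂ A A ℂ))

@[simp] lemma rActL_apply (f : A →L[ℂ] ℂ) (a b : A) : rActL A f a b = f (a * b) := rfl

/-- The action `G · f` of the bidual on the dual: `(G · f) a = G (f · a)`. -/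
def dotAct (G : Bidual A) : (A →L[ℂ] ℂ) →L[ℂ] (A →L[ℂ] ℂ) :=
  (ContinuousLinearMap.compL ℂ A (A →L[ℂ] ℂ) ℂ G).comp (rActL A)

@[simp] lemma dotAct_apply (G : Bidual A) (f : A →L[ℂ] ℂ) (a : A) :
    dotAct A G f a = G (rActL A f a) := rfl

variable {A}

/-- The first Arens product on the bidual: `⟨F □ G, f⟩ = ⟨F, G · f⟩`. -/
instance : Mul (Bidual A) := ⟨fun F G => F.comp (dotAct A G)⟩

@[simp] lemma mul_apply (F G : Bidual A) (f : A →L[ℂ] ℂ) :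
    (F * G) f = F (dotAct A G f) := rfl

lemma dotAct_add (G H : Bidual A) : dotAct A (G + H) = dotAct A G + dotAct A H := by
  refine ContinuousLinearMap.ext fun g => ContinuousLinearMap.ext fun a => ?_
  simp

lemma dotAct_zero : dotAct A (0 : Bidual A) = 0 := by
  refine ContinuousLinearMap.ext fun g => ContinuousLinearMap.ext fun a => ?_
  simp

lemma dotAct_smul (c : ℂ) (G : Bidual A) : dotAct A (c • G) = c • dotAct A G := by
  refine ContinuousLinearMap.ext fun g => ContinuousLinearMap.ext fun a => ?_
  simp

instance instNonUnitalRing : NonUnitalRing (Bidual A) where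
  __ := (inferInstance : AddCommGroup ((A →L[ℂ] ℂ) →L[ℂ] ℂ))
  mul := (· * ·)
  left_distrib F G H := by
    refine ContinuousLinearMap.ext fun f => ?_
    simp [dotAct_add]
  right_distrib F G H := by
    refine ContinuousLinearMap.ext fun f => ?_
    rfl
  zero_mul F := by refine ContinuousLinearMap.ext fun f => ?_; rfl
  mul_zero F := by
    refine ContinuousLinearMap.ext fun f => ?_
    simp [dotAct_zero]
  mul_assoc F G H := by
    refine ContinuousLinearMap.ext fun f => ?_
    show F _ = F _
    congr 1
    refine ContinuousLinearMap.ext fun a => ?_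
    show G _ = G _
    congr 1
    refine ContinuousLinearMap.ext fun b => ?_
    show H _ = H _
    congr 1
    refine ContinuousLinearMap.ext fun c => ?_
    exact congrArg f (mul_assoc a b c)

lemma norm_dotAct_apply_le (G : Bidual A) (f : A →L[ℂ] ℂ) :
    ‖dotAct A G f‖ ≤ ‖G‖ * ‖f‖ := by
  refine ContinuousLinearMap.opNorm_le_bound _ (by positivity) fun a => ?_
  calc ‖G (rActL A f a)‖ ≤ ‖G‖ * ‖rActL A f a‖ := G.le_opNorm _
    _ ≤ ‖G‖ * (‖f‖ * ‖a‖) := by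
        refine mul_le_mul_of_nonneg_left ?_ (norm_nonneg G)
        refine ContinuousLinearMap.opNorm_le_bound _ (by positivity) fun b => ?_
        calc ‖f (a * b)‖ ≤ ‖f‖ * ‖a * b‖ := f.le_opNorm _
          _ ≤ ‖f‖ * (‖a‖ * ‖b‖) :=
              mul_le_mul_of_nonneg_left (norm_mul_le a b) (norm_nonneg f)
          _ = ‖f‖ * ‖a‖ * ‖b‖ := by ring
    _ = ‖G‖ * ‖f‖ * ‖a‖ := by ring

instance instNonUnitalNormedRing : NonUnitalNormedRing (Bidual A) where
  __ := instNonUnitalRing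
  __ := (inferInstance : NormedAddCommGroup ((A →L[ℂ] ℂ) →L[ℂ] ℂ))
  norm_mul_le F G := by
    refine ContinuousLinearMap.opNorm_le_bound _ (by positivity) fun f => ?_
    calc ‖F (dotAct A G f)‖ ≤ ‖F‖ * ‖dotAct A G f‖ := F.le_opNorm _
      _ ≤ ‖F‖ * (‖G‖ * ‖f‖) :=
          mul_le_mul_of_nonneg_left (norm_dotAct_apply_le G f) (norm_nonneg F)
      _ = ‖F‖ * ‖G‖ * ‖f‖ := by ring

instance : IsScalarTower ℂ (Bidual A) (Bidual A) where
  smul_assoc c F G := by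
    refine ContinuousLinearMap.ext fun f => ?_
    rfl

instance : SMulCommClass ℂ (Bidual A) (Bidual A) where
  smul_comm c F G := by
    refine ContinuousLinearMap.ext fun f => ?_
    show c • (F (dotAct A G f)) = F (dotAct A (c • G) f)
    rw [dotAct_smul]
    simp

end Bidual


section Retract

/-- Adjoint of a continuous linear map: `h ↦ h ∘ φ`. -/
def adjC {X : Type*} {Y : Type*} [NormedAddCommGroup X] [NormedSpace ℂ X]
    [NormedAddCommGroup Y] [NormedSpace ℂ Y] (φ : X →L[ℂ] Y) :
    (Y →L[ℂ] ℂ) →L[ℂ] (X →L[ℂ] ℂ) :=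
  (ContinuousLinearMap.compL ℂ X Y ℂ).flip φ

@[simp] lemma adjC_apply {X : Type*} {Y : Type*} [NormedAddCommGroup X] [NormedSpace ℂ X]
    [NormedAddCommGroup Y] [NormedSpace ℂ Y] (φ : X →L[ℂ] Y) (h : Y →L[ℂ] ℂ) (x : X) :
    adjC φ h x = h (φ x) := rfl

/-- Bidual (double adjoint) of a continuous linear map. -/
def bidualMap {X : Type*} {Y : Type*} [NormedAddCommGroup X] [NormedSpace ℂ X]
    [NormedAddCommGroup Y] [NormedSpace ℂ Y] (φ : X →L[ℂ] Y) :
    Bidual X →L[ℂ] Bidual Y :=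
  adjC (adjC φ)

@[simp] lemma bidualMap_apply {X : Type*} {Y : Type*} [NormedAddCommGroup X] [NormedSpace ℂ X]
    [NormedAddCommGroup Y] [NormedSpace ℂ Y] (φ : X →L[ℂ] Y) (F : Bidual X) (h : Y →L[ℂ] ℂ) :
    bidualMap φ F h = F (adjC φ h) := rfl

/-- The bidual map of a continuous algebra homomorphism is multiplicative for the
first Arens products. -/
lemma bidualMap_mul {X : Type*} {Y : Type*} [NonUnitalNormedRing X] [NormedSpace ℂ X]
    [IsScalarTower ℂ X X] [SMulCommClass ℂ X X]
    [NonUnitalNormedRing Y] [NormedSpace ℂ Y]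
    [IsScalarTower ℂ Y Y] [SMulCommClass ℂ Y Y]
    (φ : X →L[ℂ] Y) (hφ : ∀ x y : X, φ (x * y) = φ x * φ y) (F G : Bidual X) :
    bidualMap φ (F * G) = bidualMap φ F * bidualMap φ G := by
  refine ContinuousLinearMap.ext fun h => ?_
  show F (Bidual.dotAct X G (adjC φ h)) = F (adjC φ (Bidual.dotAct Y (bidualMap φ G) h))
  congr 1
  refine ContinuousLinearMap.ext fun a => ?_
  show G (Bidual.rActL X (adjC φ h) a) = G (adjC φ (Bidual.rActL Y h (φ a)))
  congr 1
  refine ContinuousLinearMap.ext fun a' => ?_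
  show h (φ (a * a')) = h (φ a * φ a')
  rw [hφ]

/-- Approximate cyclic amenability passes to retracts by continuous algebra
homomorphisms. -/
lemma approxCyclicAmenable_of_retract {X : Type*} {Y : Type*}
    [NonUnitalNormedRing X] [NormedSpace ℂ X]
    [IsScalarTower ℂ X X] [SMulCommClass ℂ X X]
    [NonUnitalNormedRing Y] [NormedSpace ℂ Y]
    [IsScalarTower ℂ Y Y] [SMulCommClass ℂ Y Y]
    (θ : X →L[ℂ] Y) (hθ : ∀ x y : X, θ (x * y) = θ x * θ y)
    (σ : Y →L[ℂ] X) (hσ : ∀ x y : Y, σ (x * y) = σ x * σ y)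
    (hid : ∀ y : Y, θ (σ y) = y)
    (hX : ApproxCyclicAmenable X) : ApproxCyclicAmenable Y := by
  intro D hD hC
  -- pull back the derivation along θ
  set E : X →L[ℂ] (X →L[ℂ] ℂ) := (adjC θ).comp (D.comp θ) with hE
  have hEapp : ∀ a b : X, E a b = D (θ a) (θ b) := fun a b => rfl
  have hEder : IsDerivation E := by
    intro a b
    refine ContinuousLinearMap.ext fun c => ?_
    show D (θ (a * b)) (θ c) = D (θ a) (θ (b * c)) + D (θ b) (θ (c * a))
    rw [hθ a b, hθ b c, hθ c a, hD (θ a) (θ b)]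
    rfl
  have hEcyc : IsCyclicDeriv E := fun a b => hC (θ a) (θ b)
  obtain ⟨ι, l, f, hne, hf⟩ := hX E hEder hEcyc
  refine ⟨(Y →L[ℂ] ℂ), Filter.map (fun i => adjC σ (f i)) l, id, hne.map _, fun b => ?_⟩
  rw [tendsto_map'_iff]
  show Tendsto (fun i => lAct b (adjC σ (f i)) - rAct (adjC σ (f i)) b) l (𝓝 (D b))
  have key : ∀ g : X →L[ℂ] ℂ,
      lAct b (adjC σ g) - rAct (adjC σ g) b
        = adjC σ (lAct (σ b) g - rAct g (σ b)) := by
    intro g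
    refine ContinuousLinearMap.ext fun c => ?_
    show g (σ (c * b)) - g (σ (b * c)) = g (σ c * σ b) - g (σ b * σ c)
    rw [hσ, hσ]
  have hDb : D b = adjC σ (E (σ b)) := by
    refine ContinuousLinearMap.ext fun c => ?_
    show D b c = D (θ (σ b)) (θ (σ c))
    rw [hid, hid]
  rw [hDb]
  have := ((adjC σ).continuous.tendsto (E (σ b))).comp (hf (σ b))
  simpa [Function.comp_def, key] using this

end Retract

set_option maxHeartbeats 1000000 in
/-- If `φ : A → B` and `ψ : B → A` are continuous algebra homomorphisms
between Banach algebras with `φ ∘ ψ = id` and `(A**, □)` is approximately cyclic amenable,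
then `(B**, □)` is approximately cyclic amenable. -/
theorem bidual_approxCyclicAmenable_of_retract
    {A : Type u} {B : Type v} [NonUnitalNormedRing A] [NormedSpace ℂ A]
    [IsScalarTower ℂ A A] [SMulCommClass ℂ A A] [CompleteSpace A]
    [NonUnitalNormedRing B] [NormedSpace ℂ B]
    [IsScalarTower ℂ B B] [SMulCommClass ℂ B B] [CompleteSpace B]
    (φ : A →L[ℂ] B) (hφ : ∀ x y : A, φ (x * y) = φ x * φ y)
    (ψ : B →L[ℂ] A) (hψ : ∀ x y : B, ψ (x * y) = ψ x * ψ y)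
    (hcomp : ∀ b : B, φ (ψ b) = b)
    (hA : ApproxCyclicAmenable (Bidual A)) : ApproxCyclicAmenable (Bidual B) := by
  have hΦ := bidualMap_mul φ hφ
  have hΨ := bidualMap_mul ψ hψ
  have hid : ∀ G : Bidual B, bidualMap φ (bidualMap ψ G) = G := by
    intro G
    refine ContinuousLinearMap.ext fun h => ?_
    show G (adjC ψ (adjC φ h)) = G h
    congr 1
    refine ContinuousLinearMap.ext fun b => ?_
    show h (φ (ψ b)) = h b
    rw [hcomp]
  exact approxCyclicAmenable_of_retract (bidualMap φ) hΦ (bidualMap ψ) hΨ hid hA
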